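/- Let N_n be the n-point sample clouds from a random vector X on ℝ^d, and assume N_n converges in probability, as n → ∞, onto a limit set G = {x ∈ ℝ^d : g(x) ≤ 1} for a gauge function g. Let I_m ⊂ {1,…,d} be an index set with |I_m| = m, and let X̃ = (X_i)_{i∈I_m} be the corresponding m-dimensional marginal of X. Then the sample clouds from X̃, with the same scaling constants, converge in probability onto the limit set G̃ = P_m(G) = {y ∈ ℝ^m : g̃(y) ≤ 1}, where P_m is the coordinate projection onto the coordinates indexed by I_m and g̃(y) = min over the variables {x_i : i ∈ {1,…,d} \ I_m} of g(x), with y = (x_i)_{i∈I_m}. -/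

import Mathlib

open MeasureTheory Filter Topology ProbabilityTheory

/-- The `n`-point sample cloud `{X 1 / r n, …, X n / r n}` of the scaled observations. -/
def sampleCloud {Ω ι : Type*} (X : ℕ → Ω → (ι → ℝ)) (r : ℕ → ℝ)
    (n : ℕ) (ω : Ω) : Set (ι → ℝ) :=
  {y | ∃ i, 1 ≤ i ∧ i ≤ n ∧ y = (r n)⁻¹ • X i ω}

/-- Convergence in probability of random sets onto a deterministic set `G`, in the sense that
the Hausdorff distance to `G` tends to `0` in probability. -/
def ConvInProbOnto {Ω ι : Type*} [MeasurableSpace Ω] [Fintype ι] (μ : Measure Ω)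
    (N : ℕ → Ω → Set (ι → ℝ)) (G : Set (ι → ℝ)) : Prop :=
  ∀ ε : ℝ, 0 < ε →
    Tendsto (fun n => μ {ω | ε < Metric.hausdorffDist (N n ω) G}) atTop (𝓝 0)

private lemma lip_proj {d : ℕ} (s : Finset (Fin d)) :
    LipschitzWith 1 (fun (x : Fin d → ℝ) (i : {i // i ∈ s}) => x i.1) :=
  LipschitzWith.of_edist_le fun x y => by
    rw [edist_pi_le_iff]
    intro i
    exact edist_le_pi_edist x y i.1

private lemma hausdorffEdist_image_le {α β : Type*} [PseudoEMetricSpace α]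
    [PseudoEMetricSpace β] {f : α → β} (hf : LipschitzWith 1 f) (A B : Set α) :
    EMetric.hausdorffEdist (f '' A) (f '' B) ≤ EMetric.hausdorffEdist A B := by
  by_contra h
  push_neg at h
  obtain ⟨c, hc1, hc2⟩ := exists_between h
  have key : ∀ (A B : Set α), EMetric.hausdorffEdist A B < c →
      ∀ x ∈ A, ∃ y ∈ B, edist x y < c := by
    intro A B hAB x hx
    have : EMetric.infEdist x B < c :=
      lt_of_le_of_lt (EMetric.infEdist_le_hausdorffEdist_of_mem hx) hAB
    exact EMetric.infEdist_lt_iff.mp this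
  have : EMetric.hausdorffEdist (f '' A) (f '' B) ≤ c := by
    apply EMetric.hausdorffEdist_le_of_mem_edist
    · rintro _ ⟨x, hx, rfl⟩
      obtain ⟨y, hy, hxy⟩ := key A B hc1 x hx
      exact ⟨f y, Set.mem_image_of_mem f hy,
        le_trans (by simpa using hf.edist_le_mul x y) hxy.le⟩
    · rintro _ ⟨x, hx, rfl⟩
      obtain ⟨y, hy, hxy⟩ := key B A (by unfold EMetric.hausdorffEdist at hc1 ⊢; rwa [Metric.hausdorffEDist_comm] at hc1) x hx
      exact ⟨f y, Set.mem_image_of_mem f hy,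
        le_trans (by simpa using hf.edist_le_mul x y) hxy.le⟩
  exact absurd hc2 (not_lt.mpr this)

/-- Proposition 3 of the paper: if sample clouds from `X` converge in
probability onto the limit set `G = {x : g(x) ≤ 1}` of a gauge function `g`, then for any
index set `I_m ⊆ {1,…,d}` the sample clouds of the marginal vector `(Xᵢ)_{i ∈ I_m}`, with the
same scaling, converge in probability onto `G̃ = P_m(G) = {y : g̃(y) ≤ 1}`, where `P_m` is the
coordinate projection and `g̃(y)` is the infimum of `g` over all completions of `y`. -/
theorem marginal_limit_set
    {Ω : Type*} [MeasurableSpace Ω] (μ : Measure Ω) [IsProbabilityMeasure μ]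
    {d : ℕ} (X : ℕ → Ω → (Fin d → ℝ)) (hXmeas : ∀ i, Measurable (X i))
    -- i.i.d. copies
    (hindep : iIndepFun X μ)
    (hident : ∀ i, Measure.map (X i) μ = Measure.map (X 0) μ)
    -- gauge function and compact limit set
    (g : (Fin d → ℝ) → ℝ) (hgcont : Continuous g)
    (hghomog : ∀ t : ℝ, 0 < t → ∀ x, g (t • x) = t * g x)
    (G : Set (Fin d → ℝ)) (hG : G = {x | g x ≤ 1}) (hGcompact : IsCompact G)
    -- convergence of the sample clouds onto G
    (r : ℕ → ℝ) (hr : Tendsto r atTop atTop)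
    (hconv : ConvInProbOnto μ (sampleCloud X r) G)
    -- the marginal index set
    (s : Finset (Fin d)) :
    ConvInProbOnto μ
      (sampleCloud (fun n ω (i : {i // i ∈ s}) => X n ω i.1) r)
      ((fun (x : Fin d → ℝ) (i : {i // i ∈ s}) => x i.1) '' G) ∧
    (fun (x : Fin d → ℝ) (i : {i // i ∈ s}) => x i.1) '' G =
      {y : {i // i ∈ s} → ℝ |
        sInf (g '' {x : Fin d → ℝ | ∀ i : {i // i ∈ s}, x i.1 = y i}) ≤ 1} := by
  classical
  -- basic facts about the gauge function
  have hg0 : g 0 = 0 := by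
    have h2 := hghomog 2 (by norm_num) 0
    rw [smul_zero] at h2; linarith
  have h0G : (0 : Fin d → ℝ) ∈ G := by rw [hG]; simp [hg0]
  obtain ⟨R, hR⟩ := hGcompact.isBounded.subset_closedBall 0
  have hR0 : 0 ≤ R := by simpa using hR h0G
  have hgpos : ∀ x : Fin d → ℝ, x ≠ 0 → 0 < g x := by
    intro x hx
    by_contra h
    push_neg at h
    have hxnorm : 0 < ‖x‖ := norm_pos_iff.mpr hx
    have ht0 : 0 < (R + 1) / ‖x‖ := by positivity
    have hmem : ((R + 1) / ‖x‖) • x ∈ G := by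
      rw [hG]
      simp only [Set.mem_setOf_eq, hghomog _ ht0]
      nlinarith
    have hball := hR hmem
    simp only [Metric.mem_closedBall, dist_zero_right, norm_smul, Real.norm_eq_abs,
      abs_of_pos ht0] at hball
    rw [div_mul_cancel₀ _ (ne_of_gt hxnorm)] at hball
    linarith
  have hgnonneg : ∀ x, 0 ≤ g x := by
    intro x
    rcases eq_or_ne x 0 with rfl | hx
    · simp [hg0]
    · exact (hgpos x hx).le
  have hcoerc : ∀ x : Fin d → ℝ, ‖x‖ ≤ R * g x := by
    intro x
    rcases eq_or_ne x 0 with rfl | hx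
    · simp [hg0]
    · have hgx := hgpos x hx
      have hmem : (g x)⁻¹ • x ∈ G := by
        rw [hG]
        simp only [Set.mem_setOf_eq, hghomog _ (inv_pos.mpr hgx)]
        rw [inv_mul_cancel₀ (ne_of_gt hgx)]
      have hball := hR hmem
      simp only [Metric.mem_closedBall, dist_zero_right, norm_smul, Real.norm_eq_abs,
        abs_of_pos (inv_pos.mpr hgx)] at hball
      have hmc : g x * ((g x)⁻¹ * ‖x‖) ≤ g x * R := mul_le_mul_of_nonneg_left hball hgx.le
      rw [← mul_assoc, mul_inv_cancel₀ (ne_of_gt hgx), one_mul] at hmc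
      linarith
  have hGne : G.Nonempty := ⟨0, h0G⟩
  -- the set equality
  have heq : (fun (x : Fin d → ℝ) (i : {i // i ∈ s}) => x i.1) '' G =
      {y : {i // i ∈ s} → ℝ |
        sInf (g '' {x : Fin d → ℝ | ∀ i : {i // i ∈ s}, x i.1 = y i}) ≤ 1} := by
    apply Set.Subset.antisymm
    · rintro _ ⟨x, hxG, rfl⟩
      have hbdd : BddBelow (g '' {x' : Fin d → ℝ | ∀ i : {i // i ∈ s},
          x' i.1 = (fun (i : {i // i ∈ s}) => x i.1) i}) :=
        ⟨0, by rintro _ ⟨z, -, rfl⟩; exact hgnonneg z⟩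
      have hxS : x ∈ {x' : Fin d → ℝ | ∀ i : {i // i ∈ s},
          x' i.1 = (fun (i : {i // i ∈ s}) => x i.1) i} := fun i => rfl
      calc sInf _ ≤ g x := csInf_le hbdd ⟨x, hxS, rfl⟩
        _ ≤ 1 := by rw [hG] at hxG; exact hxG
    · intro y hy
      simp only [Set.mem_setOf_eq] at hy
      have hSne : {x : Fin d → ℝ | ∀ i : {i // i ∈ s}, x i.1 = y i}.Nonempty := by
        refine ⟨fun j => if h : j ∈ s then y ⟨j, h⟩ else 0, ?_⟩
        intro i
        simp
      obtain ⟨a, ⟨x₀, hx₀S, rfl⟩, ha⟩ := exists_lt_of_csInf_lt (hSne.image g)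
        (lt_of_le_of_lt hy one_lt_two)
      have hSclosed : IsClosed {x : Fin d → ℝ | ∀ i : {i // i ∈ s}, x i.1 = y i} := by
        have hrw : {x : Fin d → ℝ | ∀ i : {i // i ∈ s}, x i.1 = y i} =
            ⋂ i : {i // i ∈ s}, {x : Fin d → ℝ | x i.1 = y i} := by
          ext x; simp [Set.mem_iInter]
        rw [hrw]
        exact isClosed_iInter fun i => isClosed_eq (continuous_apply i.1) continuous_const
      have hKc : IsCompact ({x : Fin d → ℝ | ∀ i : {i // i ∈ s}, x i.1 = y i} ∩
          g ⁻¹' Set.Iic 2) := by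
        refine (isCompact_closedBall (0 : Fin d → ℝ) (R * 2)).of_isClosed_subset
          (hSclosed.inter (isClosed_Iic.preimage hgcont)) ?_
        rintro x ⟨-, hx2⟩
        simp only [Metric.mem_closedBall, dist_zero_right]
        calc ‖x‖ ≤ R * g x := hcoerc x
          _ ≤ R * 2 := mul_le_mul_of_nonneg_left hx2 hR0
      have hKne : ({x : Fin d → ℝ | ∀ i : {i // i ∈ s}, x i.1 = y i} ∩
          g ⁻¹' Set.Iic 2).Nonempty := ⟨x₀, hx₀S, ha.le⟩
      obtain ⟨z, hzK, hz⟩ := hKc.exists_isMinOn hKne hgcont.continuousOn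
      have hz' := isMinOn_iff.mp hz
      have hzmin : ∀ x ∈ {x : Fin d → ℝ | ∀ i : {i // i ∈ s}, x i.1 = y i}, g z ≤ g x := by
        intro x hxS
        by_cases hx2 : g x ≤ 2
        · exact hz' x ⟨hxS, hx2⟩
        · push_neg at hx2
          have := hz' x₀ ⟨hx₀S, ha.le⟩
          linarith
      have hgz : g z ≤ 1 := by
        have : g z ≤ sInf (g '' {x : Fin d → ℝ | ∀ i : {i // i ∈ s}, x i.1 = y i}) :=
          le_csInf (hSne.image g) (by rintro _ ⟨x, hxS, rfl⟩; exact hzmin x hxS)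
        linarith
      refine ⟨z, by rw [hG]; exact hgz, ?_⟩
      funext i
      exact hzK.1 i
  refine ⟨?_, heq⟩
  -- the convergence statement
  have himg : ∀ n ω, sampleCloud (fun n ω (i : {i // i ∈ s}) => X n ω i.1) r n ω =
      (fun (x : Fin d → ℝ) (i : {i // i ∈ s}) => x i.1) '' sampleCloud X r n ω := by
    intro n ω
    ext z
    simp only [sampleCloud, Set.mem_setOf_eq, Set.mem_image]
    constructor
    · rintro ⟨i, h1, h2, rfl⟩
      exact ⟨(r n)⁻¹ • X i ω, ⟨i, h1, h2, rfl⟩, rfl⟩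
    · rintro ⟨x, ⟨i, h1, h2, rfl⟩, rfl⟩
      exact ⟨i, h1, h2, rfl⟩
  intro ε hε
  have hle : ∀ n, μ {ω | ε < Metric.hausdorffDist
        (sampleCloud (fun n ω (i : {i // i ∈ s}) => X n ω i.1) r n ω)
        ((fun (x : Fin d → ℝ) (i : {i // i ∈ s}) => x i.1) '' G)} ≤
      μ {ω | ε < Metric.hausdorffDist (sampleCloud X r n ω) G} := by
    intro n
    apply measure_mono
    intro ω hω
    simp only [Set.mem_setOf_eq, himg] at hω ⊢
    have hAfin : (sampleCloud X r n ω).Finite := by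
      have hsub : sampleCloud X r n ω ⊆ (fun i => (r n)⁻¹ • X i ω) '' Set.Icc 1 n := by
        rintro z ⟨i, h1, h2, rfl⟩; exact ⟨i, ⟨h1, h2⟩, rfl⟩
      exact ((Set.finite_Icc 1 n).image _).subset hsub
    rcases (sampleCloud X r n ω).eq_empty_or_nonempty with hAe | hAne
    · rw [hAe, Set.image_empty, Metric.hausdorffDist_comm, Metric.hausdorffDist_empty] at hω
      linarith
    · have hedist : EMetric.hausdorffEdist (sampleCloud X r n ω) G ≠ ⊤ :=
        Metric.hausdorffEdist_ne_top_of_nonempty_of_bounded hAne hGne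
          hAfin.isBounded hGcompact.isBounded
      have h1 : Metric.hausdorffDist
          ((fun (x : Fin d → ℝ) (i : {i // i ∈ s}) => x i.1) '' sampleCloud X r n ω)
          ((fun (x : Fin d → ℝ) (i : {i // i ∈ s}) => x i.1) '' G) ≤
          Metric.hausdorffDist (sampleCloud X r n ω) G :=
        ENNReal.toReal_mono hedist (hausdorffEdist_image_le (lip_proj s) _ _)
      linarith
  exact tendsto_of_tendsto_of_tendsto_of_le_of_le tendsto_const_nhds (hconv ε hε)
    (fun n => zero_le) hle
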